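/- The one-color five-vertex model satisfies the Yang-Baxter equation: for any boundary data i₁,i₂,i₃,j₁,j₂,j₃ ∈ {0,1}, the sum over internal edge states of R_{y/x}(i₁,i₂;a,b)·L_x(b,i₃;j₁,c)·L_y(a,c;d,j₃) with internal edges a,b,c,d matched appropriately equals the corresponding sum with the cross on the right side, where L_x assigns weight x to a vertex iff the path exits to the right (the five allowed configurations being empty, SE-turn, horizontal, vertical, NW-turn with weights 1, x, x, 1, 1) and the cross weights R_z are 1-z (path crossing top-left to bottom-right), z (both paths bounce: top pair), 1 (both paths bounce: bottom pair), z (two paths crossing), 1 (empty). -/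
import Mathlib


/-- Weight of a white five-vertex configuration with edge occupancies
(bottom, left, top, right): the five allowed configurations are
empty (1), bottom→right (x), left→right (x), bottom→top (1), left→top (1);
all other configurations are forbidden (weight 0). -/
def Lw (x : ℚ) (b l t r : Bool) : ℚ :=
  match b, l, t, r with
  | false, false, false, false => 1
  | true,  false, false, true  => x
  | false, true,  false, true  => x
  | true,  false, true,  false => 1
  | false, true,  true,  false => 1
  | _, _, _, _ => 0

/-- Weight of a cross vertex with edge occupancies
(top-left in, bottom-left in, top-right out, bottom-right out): the five allowed
configurations are a path crossing from top-left to bottom-right (1-z), a path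
bouncing along the top (z), a path bouncing along the bottom (1), two crossing
paths (z), and the empty cross (1); all others are forbidden (weight 0). -/
def Rw (z : ℚ) (i₁ i₂ o₁ o₂ : Bool) : ℚ :=
  match i₁, i₂, o₁, o₂ with
  | true,  false, false, true  => 1 - z
  | true,  false, true,  false => z
  | false, true,  false, true  => 1
  | true,  true,  true,  true  => z
  | false, false, false, false => 1
  | _, _, _, _ => 0

/-- The Yang–Baxter equation for the one-color five-vertex model: for all boundary
data i₁,i₂,i₃,j₁,j₂,j₃, the partition function of the diagram with the cross
(spectral parameter y/x) on the left of the two-vertex column equals that of the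
diagram with the cross on the right. -/
theorem five_vertex_yang_baxter (x y : ℚ) (hx : x ≠ 0)
    (i₁ i₂ i₃ j₁ j₂ j₃ : Bool) :
    (∑ a : Bool, ∑ b : Bool, ∑ c : Bool,
        Rw (y / x) i₁ i₂ a b * Lw x i₃ b c j₁ * Lw y c a j₃ j₂) =
      ∑ a : Bool, ∑ b : Bool, ∑ c : Bool,
        Lw y i₃ i₂ c b * Lw x c i₁ j₃ a * Rw (y / x) a b j₂ j₁ := by
  rcases i₁ <;> rcases i₂ <;> rcases i₃ <;> rcases j₁ <;> rcases j₂ <;> rcases j₃ <;>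
    simp only [Fin.sum_univ_two, Fintype.sum_bool, Lw, Rw] <;> field_simp <;> ring
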